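/- Let N ∈ ℕ, let G be an N×N complex matrix, and let u_in ∈ ℂ^N. For f ∈ ℝ^N such that the matrix I − G·diag(f) is invertible, define u(f) = (I − G·diag(f))⁻¹ u_in and h(f) = diag(f)·u(f) ∈ ℂ^N. Then, at any such f, the map h : ℝ^N → ℂ^N is differentiable (as a map between real vector spaces), and its derivative at f in the direction v ∈ ℝ^N is given by d h(f; v) = (I + diag(f)·(I − G·diag(f))⁻¹·G) · diag(u(f)) · v; equivalently, the Jacobian matrix of h at f is J_h(f) = (I + diag(f)·(I − G·diag(f))⁻¹·G) · diag(u(f)). -/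

import Mathlib

open Matrix

/-- `diagC f` : the N×N complex diagonal matrix with the (real) entries of `f`
on the diagonal. -/
noncomputable def diagC {N : ℕ} (f : Fin N → ℝ) : Matrix (Fin N) (Fin N) ℂ :=
  Matrix.diagonal fun i => (f i : ℂ)

/-- The total field `u(f) = (I − G·diag(f))⁻¹ u_in` of the discrete
Lippmann–Schwinger equation. -/
noncomputable def totalField {N : ℕ} (G : Matrix (Fin N) (Fin N) ℂ)
    (uin : Fin N → ℂ) (f : Fin N → ℝ) : Fin N → ℂ :=
  (1 - G * diagC f)⁻¹ *ᵥ uin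

/-- `h(f) = diag(f)·u(f)`. -/
noncomputable def hMap {N : ℕ} (G : Matrix (Fin N) (Fin N) ℂ)
    (uin : Fin N → ℂ) (f : Fin N → ℝ) : Fin N → ℂ :=
  diagC f *ᵥ totalField G uin f

section aux
variable {N : ℕ}

attribute [local instance] Matrix.linftyOpNormedRing Matrix.linftyOpNormedAlgebra

/-- `f ↦ diagC f` as a continuous linear map. -/
noncomputable def diagCLM (N : ℕ) : (Fin N → ℝ) →L[ℝ] Matrix (Fin N) (Fin N) ℂ :=
  LinearMap.toContinuousLinearMap
    { toFun := fun v => diagC v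
      map_add' := fun a b => by simp [diagC, ← Matrix.diagonal_add]
      map_smul' := fun r a => by simp [diagC, ← Matrix.diagonal_smul] }

/-- `M ↦ M *ᵥ u` as a continuous linear map. -/
noncomputable def mulVecCLM (N : ℕ) (u : Fin N → ℂ) :
    Matrix (Fin N) (Fin N) ℂ →L[ℝ] (Fin N → ℂ) :=
  LinearMap.toContinuousLinearMap
    { toFun := fun M => M *ᵥ u
      map_add' := fun a b => Matrix.add_mulVec a b u
      map_smul' := fun r M => Matrix.smul_mulVec r M u }

/-- coercion `ℝ^N → ℂ^N` as a continuous linear map. -/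
noncomputable def coeCLM (N : ℕ) : (Fin N → ℝ) →L[ℝ] (Fin N → ℂ) :=
  LinearMap.toContinuousLinearMap
    { toFun := fun v i => (v i : ℂ)
      map_add' := fun a b => by ext i; simp
      map_smul' := fun r a => by ext i; simp [Complex.real_smul] }

theorem key (G : Matrix (Fin N) (Fin N) ℂ) (uin : Fin N → ℂ)
    (f : Fin N → ℝ) (hinv : IsUnit (1 - G * diagC f)) :
    HasFDerivAt (hMap G uin) (
      (coeCLM N f) • ((mulVecCLM N uin).comp
          ((-ContinuousLinearMap.mulLeftRight ℝ _ ((1 - G * diagC f)⁻¹) ((1 - G * diagC f)⁻¹)).comp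
            (-((ContinuousLinearMap.mul ℝ (Matrix (Fin N) (Fin N) ℂ) G).comp (diagCLM N)))))
        + ((coeCLM N).smulRight (totalField G uin f))) f := by
  have hA : HasFDerivAt (fun g : Fin N → ℝ => 1 - G * diagC g)
      (-((ContinuousLinearMap.mul ℝ (Matrix (Fin N) (Fin N) ℂ) G).comp (diagCLM N))) f := by
    have : (fun g : Fin N → ℝ => 1 - G * diagC g)
        = fun g => (1 : Matrix (Fin N) (Fin N) ℂ) +
            (-((ContinuousLinearMap.mul ℝ (Matrix (Fin N) (Fin N) ℂ) G).comp (diagCLM N))) g := by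
      funext g
      simp [diagCLM, sub_eq_add_neg]
      rfl
    rw [this]
    exact ((-((ContinuousLinearMap.mul ℝ (Matrix (Fin N) (Fin N) ℂ) G).comp
      (diagCLM N))).hasFDerivAt).const_add 1
  have hB : HasFDerivAt (fun M : Matrix (Fin N) (Fin N) ℂ => Ring.inverse M)
      (-ContinuousLinearMap.mulLeftRight ℝ _ ((1 - G * diagC f)⁻¹) ((1 - G * diagC f)⁻¹))
      (1 - G * diagC f) := by
    have h1 : ((hinv.unit⁻¹ : (Matrix (Fin N) (Fin N) ℂ)ˣ) : Matrix (Fin N) (Fin N) ℂ)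
        = (1 - G * diagC f)⁻¹ := by
      rw [Matrix.coe_units_inv, hinv.unit_spec]
    have := hasFDerivAt_ringInverse (𝕜 := ℝ) hinv.unit
    rw [hinv.unit_spec, h1] at this
    exact this
  have hu : HasFDerivAt (totalField G uin)
      ((mulVecCLM N uin).comp
        ((-ContinuousLinearMap.mulLeftRight ℝ _ ((1 - G * diagC f)⁻¹) ((1 - G * diagC f)⁻¹)).comp
          (-((ContinuousLinearMap.mul ℝ (Matrix (Fin N) (Fin N) ℂ) G).comp (diagCLM N))))) f := by
    have h2 : totalField G uin = fun g =>
        (mulVecCLM N uin) (Ring.inverse (1 - G * diagC g)) := by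
      funext g
      simp [totalField, mulVecCLM, ← Matrix.nonsing_inv_eq_ringInverse]
    rw [h2]
    have hc := hB.comp f hA
    exact ((mulVecCLM N uin).hasFDerivAt).comp f hc
  have hcoe : HasFDerivAt (fun g : Fin N → ℝ => coeCLM N g) (coeCLM N) f :=
    (coeCLM N).hasFDerivAt
  have hmul := hcoe.mul' hu
  have h3 : hMap G uin = fun g => (coeCLM N g) * totalField G uin g := by
    funext g i
    simp [hMap, coeCLM, Matrix.mulVec_diagonal, diagC]
  rw [h3]
  exact hmul


set_option maxHeartbeats 1000000 in
theorem jacobian_of_lippmann_schwinger_model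
    (N : ℕ) (G : Matrix (Fin N) (Fin N) ℂ) (uin : Fin N → ℂ)
    (f : Fin N → ℝ) (hinv : IsUnit (1 - G * diagC f)) :
    DifferentiableAt ℝ (hMap G uin) f ∧
    ∀ v : Fin N → ℝ,
      fderiv ℝ (hMap G uin) f v
        = ((1 + diagC f * (1 - G * diagC f)⁻¹ * G)
            * Matrix.diagonal (totalField G uin f)) *ᵥ (fun i => (v i : ℂ)) := by
  have hk := key G uin f hinv
  refine ⟨hk.differentiableAt, fun v => ?_⟩
  rw [hk.fderiv]
  set B := (1 - G * diagC f)⁻¹ with hBdef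
  set u0 := totalField G uin f with hu0
  have hvec : ∀ (a : Fin N → ℝ) (w : Fin N → ℂ),
      (fun i => (a i : ℂ)) * w = diagC a *ᵥ w := by
    intro a w; funext i
    simp [diagC, Matrix.mulVec_diagonal]
  have hswap : (Matrix.diagonal u0 *ᵥ fun i => ((v i : ℂ))) = diagC v *ᵥ u0 := by
    funext i
    simp [diagC, Matrix.mulVec_diagonal, mul_comm]
  have hL : ((coeCLM N f) • ((mulVecCLM N uin).comp
          ((-ContinuousLinearMap.mulLeftRight ℝ _ B B).comp
            (-((ContinuousLinearMap.mul ℝ (Matrix (Fin N) (Fin N) ℂ) G).comp (diagCLM N)))))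
        + ((coeCLM N).smulRight u0)) v
      = (fun i => ((f i : ℂ))) * ((B * (G * (diagC v * B))) *ᵥ uin)
        + (fun i => ((v i : ℂ))) * u0 := by
    simp [mulVecCLM, diagCLM, coeCLM, ContinuousLinearMap.mulLeftRight_apply,
      mul_assoc, LinearMap.coe_toContinuousLinearMap', ContinuousLinearMap.comp_apply]
    congr 1
    show (B * (G * diagC v) * B) *ᵥ uin = _
    simp only [mul_assoc]
  rw [hL, hvec, hvec, Matrix.mulVec_mulVec]
  have hu0B : u0 = B *ᵥ uin := rfl
  rw [Matrix.add_mul, one_mul, Matrix.add_mulVec, ← Matrix.mulVec_mulVec, hswap, hu0B,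
    Matrix.mulVec_mulVec]
  rw [add_comm]
  congr 1
  conv_rhs => rw [← Matrix.mulVec_mulVec]
  have hswap' : (Matrix.diagonal (B *ᵥ uin) *ᵥ fun i => ((v i : ℂ)))
      = diagC v *ᵥ (B *ᵥ uin) := hswap
  rw [hswap', Matrix.mulVec_mulVec, Matrix.mulVec_mulVec]
  noncomm_ring

end aux
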